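/- Let d > 2 be an integer, B > 0, A = −((d−2)/2)√(B/(d−1)), r₀ = (B/(d−1))^(1/4), m an integer. The function u₂(r) = (r² − r₀²)^((1−d+dm)/(2d)) · (r² + (d−1)r₀²)^(−(1−d+dm)/(2d) − d(1−2m)/4) satisfies, for r > r₀, the ODE u₂'(r) = (A·r + d(m − 1/2)·r³)/(r⁴ − 2A·r² − B) · u₂(r). -/

import Mathlib

theorem radial_ode_u2 (d : ℤ) (hd : d > 2) (B : ℝ) (hB : B > 0)
    (A r₀ : ℝ) (m : ℤ) (u₂ : ℝ → ℝ)
    (hA : A = -((d - 2 : ℝ) / 2) * Real.sqrt (B / (d - 1)))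
    (hr₀ : r₀ = (B / (d - 1)) ^ ((1 : ℝ) / 4))
    (hu : ∀ r : ℝ, u₂ r =
      (r ^ 2 - r₀ ^ 2) ^ ((1 - (d : ℝ) + d * m) / (2 * d)) *
      (r ^ 2 + ((d : ℝ) - 1) * r₀ ^ 2) ^
        (-((1 - (d : ℝ) + d * m) / (2 * d)) - (d : ℝ) * (1 - 2 * m) / 4)) :
    ∀ r : ℝ, r > r₀ →
      deriv u₂ r =
        (A * r + (d : ℝ) * ((m : ℝ) - 1 / 2) * r ^ 3) / (r ^ 4 - 2 * A * r ^ 2 - B) * u₂ r := by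
  have hdR : (2 : ℝ) < (d : ℝ) := by exact_mod_cast hd
  have hd1 : (1 : ℝ) < (d : ℝ) := by linarith
  have hd0 : (d : ℝ) ≠ 0 := by linarith
  have ht : 0 < B / ((d : ℝ) - 1) := div_pos hB (by linarith)
  have hr₀pos : 0 < r₀ := hr₀ ▸ Real.rpow_pos_of_pos ht _
  have hr₀4 : r₀ ^ 4 = B / ((d : ℝ) - 1) := by
    rw [hr₀, ← Real.rpow_natCast ((B / ((d : ℝ) - 1)) ^ ((1:ℝ)/4)) 4,
      ← Real.rpow_mul ht.le]
    norm_num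
  have hB' : B = ((d : ℝ) - 1) * r₀ ^ 4 := by
    rw [hr₀4]; field_simp [(by linarith : ((d:ℝ) - 1) ≠ 0)]
  have hr₀2 : r₀ ^ 2 = Real.sqrt (B / ((d : ℝ) - 1)) := by
    rw [hr₀, ← Real.rpow_natCast ((B / ((d : ℝ) - 1)) ^ ((1:ℝ)/4)) 2,
      ← Real.rpow_mul ht.le, Real.sqrt_eq_rpow]
    norm_num
  have hA' : A = -(((d : ℝ) - 2) / 2) * r₀ ^ 2 := by rw [hA, hr₀2]
  set α : ℝ := (1 - (d : ℝ) + d * m) / (2 * d) with hα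
  set β : ℝ := -((1 - (d : ℝ) + d * m) / (2 * d)) - (d : ℝ) * (1 - 2 * m) / 4 with hβ
  have hfun : u₂ = fun r : ℝ =>
      (r ^ 2 - r₀ ^ 2) ^ α * (r ^ 2 + ((d : ℝ) - 1) * r₀ ^ 2) ^ β := funext hu
  intro r hr
  have hx : 0 < r ^ 2 - r₀ ^ 2 := by nlinarith
  have hy : 0 < r ^ 2 + ((d : ℝ) - 1) * r₀ ^ 2 := by nlinarith
  have h1 : HasDerivAt (fun r : ℝ => r ^ 2 - r₀ ^ 2) (2 * r) r := by
    simpa using ((hasDerivAt_pow 2 r).sub_const (r₀ ^ 2))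
  have h2 : HasDerivAt (fun r : ℝ => r ^ 2 + ((d : ℝ) - 1) * r₀ ^ 2) (2 * r) r := by
    simpa using ((hasDerivAt_pow 2 r).add_const (((d : ℝ) - 1) * r₀ ^ 2))
  have hx1 := h1.rpow_const (p := α) (Or.inl hx.ne')
  have hy1 := h2.rpow_const (p := β) (Or.inl hy.ne')
  have hprod : HasDerivAt (fun y : ℝ => (y ^ 2 - r₀ ^ 2) ^ α * (y ^ 2 + ((d : ℝ) - 1) * r₀ ^ 2) ^ β) _ r :=
    hx1.mul hy1
  rw [hfun]
  rw [hprod.deriv]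
  have hXsub : (r ^ 2 - r₀ ^ 2) ^ (α - 1)
      = (r ^ 2 - r₀ ^ 2) ^ α * (r ^ 2 - r₀ ^ 2)⁻¹ := by
    rw [Real.rpow_sub hx, Real.rpow_one, div_eq_mul_inv]
  have hYsub : (r ^ 2 + ((d : ℝ) - 1) * r₀ ^ 2) ^ (β - 1)
      = (r ^ 2 + ((d : ℝ) - 1) * r₀ ^ 2) ^ β * (r ^ 2 + ((d : ℝ) - 1) * r₀ ^ 2)⁻¹ := by
    rw [Real.rpow_sub hy, Real.rpow_one, div_eq_mul_inv]
  have hden : r ^ 4 - 2 * A * r ^ 2 - B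
      = (r ^ 2 - r₀ ^ 2) * (r ^ 2 + ((d : ℝ) - 1) * r₀ ^ 2) := by
    rw [hA', hB']; ring
  beta_reduce
  rw [hXsub, hYsub, hden, hA']
  set X := (r ^ 2 - r₀ ^ 2) ^ α with hX
  set Y := (r ^ 2 + ((d : ℝ) - 1) * r₀ ^ 2) ^ β with hY
  clear_value X Y
  clear hX hY hXsub hYsub hprod hx1 hy1 hfun hu
  rw [hα, hβ]
  field_simp [hx.ne', hy.ne', (show r ^ 2 + r₀ ^ 2 * ((d : ℝ) - 1) ≠ 0 by intro h; nlinarith)]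
  ring
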